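/- arXiv:2201.11968 — 2 statements merged into one kernel-verified Lean document; each statement's English description precedes it below -/
import Mathlib

section
/- Let K ≥ 1, let n₀, n₁, …, n_K be positive integers with n_K = 1, and for each j ∈ {1,…,K} let W_j : ℝ → Mat_{n_j × n_{j-1}}(ℝ) be a matrix-valued curve (a chain of linear fully-connected layers ending in a scalar-output layer). Assume the adjacent-layer Gram invariance: for every j ∈ {1,…,K−1} and every t ∈ ℝ, (W_{j+1}(t))ᵀ W_{j+1}(t) − W_j(t)(W_j(t))ᵀ = (W_{j+1}(0))ᵀ W_{j+1}(0) − W_j(0)(W_j(0))ᵀ. Then there exists a constant D ≥ 0, depending only on the matrices W_1(0), …, W_K(0), such that for every t ∈ ℝ and every j ∈ {1,…,K}, ‖W_j(t)‖_F² − ‖W_j(t)‖₂² ≤ D. -/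
open Matrix

/-- The spectral norm (largest singular value) of a real matrix: its operator norm
as a linear map between Euclidean `ℓ²` spaces. -/
noncomputable def matrixSpectralNorm {m n : Type*} [Fintype m] [Fintype n] [DecidableEq n]
    (M : Matrix m n ℝ) : ℝ :=
  ‖LinearMap.toContinuousLinearMap (Matrix.toEuclideanLin M)‖

open scoped Matrix.Norms.L2Operator

/-- `spectralNorm` agrees with the scoped `L2OpNorm` on matrices. -/
lemma spectralNorm_eq_l2norm {m n : Type*} [Fintype m] [Fintype n] [DecidableEq n]
    (M : Matrix m n ℝ) : matrixSpectralNorm M = ‖M‖ := rfl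

/-- Each entry of a real matrix is at most its `ℓ²` operator norm. -/
lemma entry_le_l2 {m n : Type*} [Fintype m] [Fintype n] [DecidableEq n]
    (A : Matrix m n ℝ) (i : m) (j : n) : A i j ≤ ‖A‖ := by
  have hx : ‖EuclideanSpace.single j (1:ℝ)‖ = 1 := by
    simp [EuclideanSpace.norm_single]
  have h1 : A i j = ((EuclideanSpace.equiv m ℝ).symm (A *ᵥ (EuclideanSpace.single j 1))) i := by
    simp [Matrix.mulVec, dotProduct, EuclideanSpace.single_apply]
  have h2 := A.l2_opNorm_mulVec (EuclideanSpace.single j 1)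
  rw [hx, mul_one] at h2
  set y := (EuclideanSpace.equiv m ℝ).symm (A *ᵥ (EuclideanSpace.single j 1)) with hy
  have h3 : y i ≤ ‖y‖ := by
    have : |y i| ≤ ‖y‖ := by
      rw [EuclideanSpace.norm_eq]
      have : |y i| = Real.sqrt (‖y i‖^2) := by
        rw [Real.sqrt_sq_eq_abs]; simp
      rw [this]
      apply Real.sqrt_le_sqrt
      exact Finset.single_le_sum (f := fun k => ‖y k‖^2) (fun k _ => by positivity)
        (Finset.mem_univ i)
    linarith [abs_le.mp this]
  rw [h1]; exact h3.trans h2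

lemma norm_mul_transpose_self {m n : Type*} [Fintype m] [Fintype n] [DecidableEq n]
    [DecidableEq m] (A : Matrix m n ℝ) : ‖A * Aᵀ‖ = ‖A‖ ^ 2 := by
  have h : Aᵀ = Aᴴ := by ext i j; simp
  rw [h]
  have h2 := Matrix.l2_opNorm_conjTranspose_mul_self Aᴴ
  rw [Matrix.conjTranspose_conjTranspose] at h2
  rw [h2, Matrix.l2_opNorm_conjTranspose, sq]

lemma norm_transpose_mul_self {m n : Type*} [Fintype m] [Fintype n] [DecidableEq n]
    [DecidableEq m] (A : Matrix m n ℝ) : ‖Aᵀ * A‖ = ‖A‖ ^ 2 := by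
  have h : Aᵀ = Aᴴ := by ext i j; simp
  rw [h, Matrix.l2_opNorm_conjTranspose_mul_self, sq]

lemma trace_mul_transpose_self {m n : Type*} [Fintype m] [Fintype n]
    (A : Matrix m n ℝ) : Matrix.trace (A * Aᵀ) = ∑ i, ∑ k, A i k ^ 2 := by
  simp [Matrix.trace, Matrix.diag, Matrix.mul_apply, sq]

lemma trace_transpose_mul_self {m n : Type*} [Fintype m] [Fintype n]
    (A : Matrix m n ℝ) : Matrix.trace (Aᵀ * A) = ∑ i, ∑ k, A i k ^ 2 := by
  simp only [Matrix.trace, Matrix.diag, Matrix.mul_apply, Matrix.transpose_apply, sq]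
  exact Finset.sum_comm

/-- For a matrix with a single row, the squared Frobenius norm is at most the squared
`ℓ²` operator norm (in fact they are equal). -/
lemma frob_le_sq {m n : Type*} [Fintype m] [Fintype n] [DecidableEq n] [DecidableEq m] [Unique m]
    (A : Matrix m n ℝ) : ∑ i, ∑ k, A i k ^ 2 ≤ ‖A‖ ^ 2 := by
  have h1 : ∑ i, ∑ k, A i k ^ 2 = (A * Aᵀ) default default := by
    rw [Fintype.sum_unique]
    simp [Matrix.mul_apply, sq]
  rw [h1, ← norm_mul_transpose_self]
  exact entry_le_l2 _ _ _

/-- **Bounded gap between squared Frobenius and spectral norm along a chain of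
linear layers with scalar output.** Layers `W j : ℝ → Mat_{n (j+1) × n j}(ℝ)` for
`j = 0,…,K-1` (paper layers `1,…,K`), with `n K = 1`, satisfying the adjacent-layer
Gram invariance, have `‖W_j(t)‖_F² - ‖W_j(t)‖₂² ≤ D` for a constant `D ≥ 0`
independent of `t` and `j`. -/
theorem frobenius_spectral_gap_bounded
    (K : ℕ) (hK : 1 ≤ K)
    (n : ℕ → ℕ) (hn : ∀ j ≤ K, 0 < n j) (hlast : n K = 1)
    (W : (j : ℕ) → ℝ → Matrix (Fin (n (j + 1))) (Fin (n j)) ℝ)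
    (hGram : ∀ j : ℕ, j + 1 < K → ∀ t : ℝ,
      (W (j + 1) t)ᵀ * W (j + 1) t - W j t * (W j t)ᵀ
        = (W (j + 1) 0)ᵀ * W (j + 1) 0 - W j 0 * (W j 0)ᵀ) :
    ∃ D : ℝ, 0 ≤ D ∧ ∀ t : ℝ, ∀ j < K,
      (∑ i, ∑ k, (W j t i k) ^ 2) - matrixSpectralNorm (W j t) ^ 2 ≤ D := by
  classical
  set c : ℕ → ℝ := fun j => ‖(W (j+1) 0)ᵀ * W (j+1) 0 - W j 0 * (W j 0)ᵀ‖ with hc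
  set d : ℕ → ℝ := fun j =>
    (∑ i, ∑ k, (W (j+1) 0 i k) ^ 2) - ∑ i, ∑ k, (W j 0 i k) ^ 2 with hd
  -- Frobenius difference is constant along t (trace of the Gram invariance)
  have hF : ∀ j, j + 1 < K → ∀ t : ℝ,
      (∑ i, ∑ k, (W (j+1) t i k) ^ 2) - (∑ i, ∑ k, (W j t i k) ^ 2) = d j := by
    intro j hj t
    have h := congrArg Matrix.trace (hGram j hj t)
    rw [Matrix.trace_sub, Matrix.trace_sub, trace_transpose_mul_self, trace_mul_transpose_self,
      trace_transpose_mul_self, trace_mul_transpose_self] at h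
    simpa [hd] using h
  -- Spectral norms of consecutive layers differ by at most the norm of the constant matrix
  have hS : ∀ j, j + 1 < K → ∀ t : ℝ,
      ‖W (j+1) t‖ ^ 2 ≤ ‖W j t‖ ^ 2 + c j := by
    intro j hj t
    calc ‖W (j+1) t‖ ^ 2 = ‖(W (j+1) t)ᵀ * W (j+1) t‖ := (norm_transpose_mul_self _).symm
      _ = ‖W j t * (W j t)ᵀ + ((W (j+1) 0)ᵀ * W (j+1) 0 - W j 0 * (W j 0)ᵀ)‖ := by
          rw [← hGram j hj t]; congr 1; abel
      _ ≤ ‖W j t * (W j t)ᵀ‖ + c j := norm_add_le _ _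
      _ = ‖W j t‖ ^ 2 + c j := by rw [norm_mul_transpose_self]
  -- Downward induction from the top (scalar-output) layer
  have key : ∀ r : ℕ, ∀ j, j < K → K - 1 - j = r → ∀ t : ℝ,
      (∑ i, ∑ k, (W j t i k) ^ 2) - ‖W j t‖ ^ 2
        ≤ ∑ i ∈ Finset.Ico j (K - 1), (c i - d i) := by
    intro r
    induction r with
    | zero =>
      intro j hj hr t
      have hjK : j + 1 = K := by omega
      have h1 : n (j + 1) = 1 := by rw [hjK]; exact hlast
      haveI : Unique (Fin (n (j + 1))) := by rw [h1]; infer_instance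
      have h2 := frob_le_sq (W j t)
      have hempty : Finset.Ico j (K - 1) = ∅ := Finset.Ico_eq_empty (by omega)
      rw [hempty, Finset.sum_empty]
      linarith
    | succ r ih =>
      intro j hj hr t
      have hjK : j + 1 < K := by omega
      have h1 := hF j hjK t
      have h2 := hS j hjK t
      have h3 := ih (j + 1) (by omega) (by omega) t
      have hsplit : ∑ i ∈ Finset.Ico j (K - 1), (c i - d i)
          = (c j - d j) + ∑ i ∈ Finset.Ico (j + 1) (K - 1), (c i - d i) :=
        Finset.sum_eq_sum_Ico_succ_bot (by omega) _
      rw [hsplit]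
      linarith
  refine ⟨∑ i ∈ Finset.range (K - 1), |c i - d i|,
    Finset.sum_nonneg (fun i _ => abs_nonneg _), ?_⟩
  intro t j hj
  have h := key (K - 1 - j) j hj rfl t
  rw [spectralNorm_eq_l2norm]
  refine h.trans (le_trans (Finset.sum_le_sum fun i _ => le_abs_self _) ?_)
  refine Finset.sum_le_sum_of_subset_of_nonneg ?_ (fun i _ _ => abs_nonneg _)
  intro x hx
  simp only [Finset.mem_Ico, Finset.mem_range] at *
  omega
end

section
/- Let K ≥ 1, let n₀, n₁, …, n_K be positive integers with n_K = 1, and for each j ∈ {1,…,K} let W_j : ℝ → Mat_{n_j × n_{j-1}}(ℝ) be a matrix-valued curve satisfying, for every j ∈ {1,…,K−1} and every t ∈ ℝ, (W_{j+1}(t))ᵀ W_{j+1}(t) − W_j(t)(W_j(t))ᵀ = (W_{j+1}(0))ᵀ W_{j+1}(0) − W_j(0)(W_j(0))ᵀ. Assume moreover that ‖W_1(t)‖_F → ∞ as t → ∞. Then for every j ∈ {1,…,K}, the ratio ‖W_j(t)‖₂² / ‖W_j(t)‖_F² converges to 1 as t → ∞. -/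
open Matrix

/-- The Frobenius norm of a real matrix. -/
noncomputable def frobeniusNorm {m n : Type*} [Fintype m] [Fintype n]
    (M : Matrix m n ℝ) : ℝ :=
  Real.sqrt (∑ i, ∑ j, (M i j) ^ 2)

section AuxLemmas

variable {m n : Type*} [Fintype m] [Fintype n]

lemma frobeniusNorm_nonneg (M : Matrix m n ℝ) : 0 ≤ frobeniusNorm M := Real.sqrt_nonneg _

lemma frobeniusNorm_sq (M : Matrix m n ℝ) :
    frobeniusNorm M ^ 2 = ∑ i, ∑ j, (M i j) ^ 2 := by
  rw [frobeniusNorm, Real.sq_sqrt]; positivity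

lemma euclidean_norm_eq (x : EuclideanSpace ℝ n) : ‖x‖ = Real.sqrt (∑ j, x j ^ 2) := by
  rw [EuclideanSpace.norm_eq]
  congr 1
  exact Finset.sum_congr rfl fun j _ => by rw [Real.norm_eq_abs, sq_abs]

lemma toEuclideanLin_apply' (M : Matrix m n ℝ) [DecidableEq n] (x : EuclideanSpace ℝ n) (i : m) :
    (LinearMap.toContinuousLinearMap (Matrix.toEuclideanLin M) x) i = ∑ j, M i j * x j := rfl

lemma matrixSpectralNorm_le_frobeniusNorm [DecidableEq n] (M : Matrix m n ℝ) :
    matrixSpectralNorm M ≤ frobeniusNorm M := by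
  rw [matrixSpectralNorm]
  apply ContinuousLinearMap.opNorm_le_bound _ (frobeniusNorm_nonneg M)
  intro x
  rw [euclidean_norm_eq, euclidean_norm_eq, frobeniusNorm]
  rw [← Real.sqrt_mul (by positivity)]
  apply Real.sqrt_le_sqrt
  rw [Finset.sum_mul]
  apply Finset.sum_le_sum
  intro i _
  rw [toEuclideanLin_apply' M x i]
  exact Finset.sum_mul_sq_le_sq_mul_sq _ _ _

lemma matrixSpectralNorm_of_subsingleton [Subsingleton m] [DecidableEq n] (M : Matrix m n ℝ) :
    matrixSpectralNorm M = frobeniusNorm M := by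
  refine le_antisymm (matrixSpectralNorm_le_frobeniusNorm M) ?_
  rcases isEmpty_or_nonempty m with hm | hm
  · have h1 : frobeniusNorm M = 0 := by rw [frobeniusNorm]; simp
    rw [h1]
    exact norm_nonneg _
  · obtain ⟨i₀⟩ := hm
    haveI : Unique m := uniqueOfSubsingleton i₀
    have hsum : ∀ f : m → ℝ, ∑ i, f i = f i₀ := fun f =>
      (Fintype.sum_unique f).trans (congrArg f (Subsingleton.elim _ _))
    rcases eq_or_lt_of_le (frobeniusNorm_nonneg M) with h0 | h0
    · rw [← h0]; exact norm_nonneg _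
    · set x : EuclideanSpace ℝ n := (WithLp.equiv 2 (n → ℝ)).symm (fun j => M i₀ j) with hx
      have hxj : ∀ j, x j = M i₀ j := fun j => rfl
      have hfs : frobeniusNorm M ^ 2 = ∑ j, M i₀ j ^ 2 := by
        rw [frobeniusNorm_sq, hsum (fun i => ∑ j, M i j ^ 2)]
      have hxnorm : ‖x‖ = frobeniusNorm M := by
        rw [euclidean_norm_eq, frobeniusNorm, hsum (fun i => ∑ j, M i j ^ 2)]
        exact congrArg Real.sqrt (Finset.sum_congr rfl fun j _ => by rw [hxj])
      set A := LinearMap.toContinuousLinearMap (Matrix.toEuclideanLin M) with hA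
      have h1 : A x i₀ = ∑ j, M i₀ j * x j := toEuclideanLin_apply' M x i₀
      have h2 : A x i₀ = frobeniusNorm M ^ 2 := by
        rw [h1, hfs]
        exact Finset.sum_congr rfl fun j _ => by rw [hxj, sq]
      have happ : ‖A x‖ = frobeniusNorm M ^ 2 := by
        rw [euclidean_norm_eq, hsum (fun i => A x i ^ 2), h2, Real.sqrt_sq (by positivity)]
      have hle := A.le_opNorm x
      rw [happ, hxnorm, sq] at hle
      rw [matrixSpectralNorm, ← hA]
      exact le_of_mul_le_mul_right (by linarith [hle]) h0


lemma matrixSpectralNorm_nonneg {m n : Type*} [Fintype m] [Fintype n] [DecidableEq n]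
    (M : Matrix m n ℝ) : 0 ≤ matrixSpectralNorm M := norm_nonneg _

open scoped Matrix.Norms.L2Operator in
lemma matrixSpectralNorm_eq_norm [DecidableEq n] (M : Matrix m n ℝ) : matrixSpectralNorm M = ‖M‖ := rfl

open scoped Matrix.Norms.L2Operator in
lemma matrixSpectralNorm_transpose [DecidableEq m] [DecidableEq n] (M : Matrix m n ℝ) :
    matrixSpectralNorm Mᵀ = matrixSpectralNorm M := by
  rw [matrixSpectralNorm_eq_norm, matrixSpectralNorm_eq_norm, ← Matrix.conjTranspose_eq_transpose_of_trivial,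
    Matrix.l2_opNorm_conjTranspose]

open scoped Matrix.Norms.L2Operator in
lemma matrixSpectralNorm_transpose_mul_self [DecidableEq n] (M : Matrix m n ℝ) :
    matrixSpectralNorm (Mᵀ * M) = matrixSpectralNorm M ^ 2 := by
  rw [matrixSpectralNorm_eq_norm, matrixSpectralNorm_eq_norm, ← Matrix.conjTranspose_eq_transpose_of_trivial,
    Matrix.l2_opNorm_conjTranspose_mul_self, sq]

lemma matrixSpectralNorm_self_mul_transpose [DecidableEq m] [DecidableEq n] (M : Matrix m n ℝ) :
    matrixSpectralNorm (M * Mᵀ) = matrixSpectralNorm M ^ 2 := by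
  have := matrixSpectralNorm_transpose_mul_self Mᵀ
  rw [Matrix.transpose_transpose, matrixSpectralNorm_transpose] at this
  exact this

open scoped Matrix.Norms.L2Operator in
lemma matrixSpectralNorm_sub_le [DecidableEq n] (A B : Matrix m n ℝ) :
    matrixSpectralNorm A - matrixSpectralNorm B ≤ matrixSpectralNorm (A - B) := by
  simp only [matrixSpectralNorm_eq_norm]
  exact norm_sub_norm_le A B

lemma frobeniusNorm_sq_eq_trace (M : Matrix m n ℝ) :
    frobeniusNorm M ^ 2 = Matrix.trace (Mᵀ * M) := by
  rw [frobeniusNorm_sq, Matrix.trace]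
  simp only [Matrix.diag_apply, Matrix.mul_apply, Matrix.transpose_apply]
  rw [Finset.sum_comm]
  simp [sq]

open Filter in
lemma tendsto_ratio_aux (S F : ℝ → ℝ) (c d : ℝ) (hF : Tendsto F atTop atTop)
    (hr : Tendsto (fun t => S t / F t) atTop (nhds 1)) :
    Tendsto (fun t => (S t - c) / (F t + d)) atTop (nhds 1) := by
  have hFd : Tendsto (fun t => F t + d) atTop atTop := tendsto_atTop_add_const_right _ d hF
  have hc : Tendsto (fun t => c / (F t + d)) atTop (nhds 0) :=
    Tendsto.div_atTop tendsto_const_nhds hFd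
  have hd0 : Tendsto (fun t => d / (F t + d)) atTop (nhds 0) :=
    Tendsto.div_atTop tendsto_const_nhds hFd
  have hquot : Tendsto (fun t => F t / (F t + d)) atTop (nhds 1) := by
    have h1 : Tendsto (fun t => 1 - d / (F t + d)) atTop (nhds 1) := by
      simpa using (tendsto_const_nhds (x := (1:ℝ)) (f := atTop)).sub hd0
    apply h1.congr'
    filter_upwards [hFd.eventually_gt_atTop 0] with t ht
    field_simp
    ring
  have hmain : Tendsto (fun t => (S t / F t) * (F t / (F t + d)) - c / (F t + d))
      atTop (nhds 1) := by
    simpa using (hr.mul hquot).sub hc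
  apply hmain.congr'
  filter_upwards [hF.eventually_gt_atTop 0, hFd.eventually_gt_atTop 0] with t h1 h2
  field_simp


end AuxLemmas

open Filter

/-- **Asymptotic rank-one bias.** For a chain of linear layers
`W j : ℝ → Mat_{n (j+1) × n j}(ℝ)`, `j = 0,…,K-1` (paper layers `1,…,K`), with scalar
output (`n K = 1`) and the adjacent-layer Gram invariance, if the Frobenius norm of the
first layer diverges, then for every layer the ratio `‖W_j(t)‖₂² / ‖W_j(t)‖_F²`
converges to `1`. -/
theorem spectral_frobenius_ratio_tendsto_one
    (K : ℕ) (hK : 1 ≤ K)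
    (n : ℕ → ℕ) (hn : ∀ j ≤ K, 0 < n j) (hlast : n K = 1)
    (W : (j : ℕ) → ℝ → Matrix (Fin (n (j + 1))) (Fin (n j)) ℝ)
    (hGram : ∀ j : ℕ, j + 1 < K → ∀ t : ℝ,
      (W (j + 1) t)ᵀ * W (j + 1) t - W j t * (W j t)ᵀ
        = (W (j + 1) 0)ᵀ * W (j + 1) 0 - W j 0 * (W j 0)ᵀ)
    (hdiv : Filter.Tendsto (fun t => frobeniusNorm (W 0 t)) Filter.atTop Filter.atTop) :
    ∀ j < K,
      Filter.Tendsto (fun t => matrixSpectralNorm (W j t) ^ 2 / frobeniusNorm (W j t) ^ 2)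
        Filter.atTop (nhds 1) := by
  have hFrec : ∀ j, j + 1 < K → ∀ t : ℝ,
      frobeniusNorm (W (j+1) t) ^ 2 = frobeniusNorm (W j t) ^ 2 +
        (frobeniusNorm (W (j+1) 0) ^ 2 - frobeniusNorm (W j 0) ^ 2) := by
    intro j hj t
    have h := congrArg Matrix.trace (hGram j hj t)
    rw [Matrix.trace_sub, Matrix.trace_sub, ← frobeniusNorm_sq_eq_trace,
      ← frobeniusNorm_sq_eq_trace] at h
    have e : ∀ s : ℝ, Matrix.trace (W j s * (W j s)ᵀ) = frobeniusNorm (W j s) ^ 2 := fun s => by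
      rw [Matrix.trace_mul_comm, ← frobeniusNorm_sq_eq_trace]
    rw [e t, e 0] at h
    linarith
  have hFdiv : ∀ j, j < K →
      Tendsto (fun t => frobeniusNorm (W j t) ^ 2) atTop atTop := by
    intro j
    induction j with
    | zero =>
      intro _
      exact (tendsto_pow_atTop (two_ne_zero)).comp hdiv
    | succ j ih =>
      intro hj
      have heq : (fun t => frobeniusNorm (W (j+1) t) ^ 2)
          = fun t => frobeniusNorm (W j t) ^ 2 +
            (frobeniusNorm (W (j+1) 0) ^ 2 - frobeniusNorm (W j 0) ^ 2) :=
        funext (hFrec j hj)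
      rw [heq]
      exact tendsto_atTop_add_const_right _ _ (ih (Nat.lt_of_succ_lt hj))
  have hSrec : ∀ j, (hj : j + 1 < K) → ∀ t : ℝ,
      matrixSpectralNorm (W (j+1) t) ^ 2
        - matrixSpectralNorm ((W (j + 1) 0)ᵀ * W (j + 1) 0 - W j 0 * (W j 0)ᵀ)
        ≤ matrixSpectralNorm (W j t) ^ 2 := by
    intro j hj t
    have h := hGram j hj t
    have key := matrixSpectralNorm_sub_le ((W (j+1) t)ᵀ * W (j+1) t)
      ((W (j+1) t)ᵀ * W (j+1) t - W j t * (W j t)ᵀ)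
    rw [sub_sub_cancel, matrixSpectralNorm_transpose_mul_self,
      matrixSpectralNorm_self_mul_transpose, h] at key
    linarith
  have key : ∀ d j, j + d + 1 = K →
      Tendsto (fun t => matrixSpectralNorm (W j t) ^ 2 / frobeniusNorm (W j t) ^ 2)
        atTop (nhds 1) := by
    intro d
    induction d with
    | zero =>
      intro j hj
      have hKj : j + 1 = K := by omega
      have h1 : n (j+1) = 1 := by rw [hKj, hlast]
      haveI : Subsingleton (Fin (n (j+1))) := by rw [h1]; infer_instance
      have hspec : ∀ t : ℝ, matrixSpectralNorm (W j t) = frobeniusNorm (W j t) := fun t =>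
        matrixSpectralNorm_of_subsingleton _
      have hFj := hFdiv j (by omega)
      apply Filter.Tendsto.congr' _ (tendsto_const_nhds (x := (1:ℝ)) (f := atTop))
      filter_upwards [hFj.eventually_gt_atTop 0] with t ht
      rw [hspec t, div_self ht.ne']
    | succ d ih =>
      intro j hj
      have hjK : j + 1 < K := by omega
      have hrat := ih (j+1) (by omega)
      have hF1 := hFdiv (j+1) (by omega)
      set c := matrixSpectralNorm ((W (j + 1) 0)ᵀ * W (j + 1) 0 - W j 0 * (W j 0)ᵀ) with hc
      set d' := frobeniusNorm (W j 0) ^ 2 - frobeniusNorm (W (j+1) 0) ^ 2 with hd'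
      have hFeq : ∀ t : ℝ, frobeniusNorm (W j t) ^ 2 = frobeniusNorm (W (j+1) t) ^ 2 + d' := by
        intro t
        have := hFrec j hjK t
        rw [hd']
        linarith
      have hg := tendsto_ratio_aux _ _ c d' hF1 hrat
      have hFj := hFdiv j (by omega)
      refine tendsto_of_tendsto_of_tendsto_of_le_of_le' hg
        (tendsto_const_nhds (x := (1:ℝ)) (f := atTop)) ?_ ?_
      · filter_upwards [hFj.eventually_gt_atTop 0] with t ht
        rw [← hFeq t]
        exact div_le_div_of_nonneg_right (hSrec j hjK t) ht.le
      · filter_upwards [hFj.eventually_gt_atTop 0] with t ht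
        rw [div_le_one ht]
        exact pow_le_pow_left₀ (matrixSpectralNorm_nonneg _) (matrixSpectralNorm_le_frobeniusNorm _) 2
  intro j hj
  exact key (K - j - 1) j (by omega)
end
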